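/- arXiv:2009.04865 — 8 statements merged into one kernel-verified Lean document; each statement's English description precedes it below -/
import Mathlib

section
/- The function h' solves the exterior constant mean curvature equation: for every r > 2M, h''(r) + (f(r)⁻¹ − h'(r)²·f(r))·(2f(r)/r + f'(r)/2)·h'(r) + (f'(r)/f(r))·h'(r) − 3Ĥ·(f(r)⁻¹ − h'(r)²·f(r))^(3/2) = 0, where h'' denotes the derivative of h' and f'(r) = 2M/r² is the derivative of f. -/
open Real Filter Topology Set

/-- Schwarzschild lapse-type function `f(r) = 1 - 2M/r`. -/
noncomputable def f (M r : ℝ) : ℝ := 1 - 2 * M / r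

/-- `P(r) = Ĥ·r + c₁/r²`. -/
noncomputable def P (H c1 r : ℝ) : ℝ := H * r + c1 / r ^ 2

/-- Slope of the height function of the exterior CMC slice:
`h'(r) = P(r)/(f(r)·√(f(r) + P(r)²))`. -/
noncomputable def h' (M H c1 r : ℝ) : ℝ :=
  P H c1 r / (f M r * Real.sqrt (f M r + (P H c1 r) ^ 2))

/-- The function `h'` solves the exterior constant mean curvature equation: for every
`r > 2M` there is a derivative `h''(r)` of `h'` at `r` such that
`h'' + (f⁻¹ − h'²f)(2f/r + f'/2)h' + (f'/f)h' − 3Ĥ(f⁻¹ − h'²f)^{3/2} = 0`,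
where `f'(r) = 2M/r²`. -/
theorem exterior_cmc_equation (M H c1 : ℝ) (hM : 0 < M) :
    ∀ r : ℝ, 2 * M < r → ∃ h'' : ℝ, HasDerivAt (h' M H c1) h'' r ∧
      h'' + ((f M r)⁻¹ - (h' M H c1 r) ^ 2 * f M r) *
          (2 * f M r / r + (2 * M / r ^ 2) / 2) * h' M H c1 r
        + ((2 * M / r ^ 2) / f M r) * h' M H c1 r
        - 3 * H * ((f M r)⁻¹ - (h' M H c1 r) ^ 2 * f M r) ^ ((3 : ℝ) / 2) = 0 := by
  intro r hr
  have hr0 : 0 < r := lt_trans (by linarith) hr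
  have hrne : r ≠ 0 := ne_of_gt hr0
  have hfpos : 0 < f M r := by
    unfold f
    rw [sub_pos, div_lt_one hr0]
    exact hr
  have hfne : f M r ≠ 0 := ne_of_gt hfpos
  set p : ℝ := P H c1 r with hp
  have hQpos : 0 < f M r + p ^ 2 := by positivity
  set s : ℝ := Real.sqrt (f M r + p ^ 2) with hsdef
  have hspos : 0 < s := Real.sqrt_pos.mpr hQpos
  have hsne : s ≠ 0 := ne_of_gt hspos
  have hs2 : s ^ 2 = f M r + p ^ 2 := Real.sq_sqrt hQpos.le
  -- derivatives
  have hfD : HasDerivAt (f M) (2 * M / r ^ 2) r := by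
    have h1 : HasDerivAt (fun x : ℝ => 2 * M / x) (-(2 * M) / r ^ 2) r := by
      have h0 := (hasDerivAt_inv hrne).const_mul (2 * M)
      simp only [div_eq_mul_inv]
      refine h0.congr_deriv ?_
      ring
    have := (hasDerivAt_const r (1:ℝ)).sub h1
    exact this.congr_deriv (by ring)
  have hPD : HasDerivAt (P H c1) (H - 2 * c1 / r ^ 3) r := by
    have h1 : HasDerivAt (fun x : ℝ => H * x) H r := by
      simpa using (hasDerivAt_id r).const_mul H
    have h2 : HasDerivAt (fun x : ℝ => c1 / x ^ 2) (-2 * c1 / r ^ 3) r := by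
      have hx : HasDerivAt (fun x : ℝ => x ^ 2) (2 * r) r := by
        simpa using hasDerivAt_pow 2 r
      have := (hx.inv (pow_ne_zero 2 hrne)).const_mul c1
      refine this.congr_deriv ?_
      field_simp
    have := h1.add h2
    exact this.congr_deriv (by ring)
  set p' : ℝ := H - 2 * c1 / r ^ 3 with hp'
  set Q' : ℝ := 2 * M / r ^ 2 + 2 * p * p' with hQ'
  have hQD : HasDerivAt (fun x => f M x + (P H c1 x) ^ 2) Q' r := by
    have := hfD.add ((hPD.pow 2))
    exact this.congr_deriv (by rw [hQ', hp]; push_cast; ring)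
  have hsD : HasDerivAt (fun x => Real.sqrt (f M x + (P H c1 x) ^ 2)) (Q' / (2 * s)) r :=
    hQD.sqrt (ne_of_gt hQpos)
  have hdenD : HasDerivAt (fun x => f M x * Real.sqrt (f M x + (P H c1 x) ^ 2))
      (2 * M / r ^ 2 * s + f M r * (Q' / (2 * s))) r := by
    exact hfD.mul hsD
  have hhD : HasDerivAt (h' M H c1)
      ((p' * (f M r * s) - p * (2 * M / r ^ 2 * s + f M r * (Q' / (2 * s)))) / (f M r * s) ^ 2)
      r := by
    have := hPD.div hdenD (mul_ne_zero hfne hsne)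
    exact this
  refine ⟨_, hhD, ?_⟩
  have hh'val : h' M H c1 r = p / (f M r * s) := by rw [h', hsdef, hp]
  have hX : (f M r)⁻¹ - (h' M H c1 r) ^ 2 * f M r = (s ^ 2)⁻¹ := by
    rw [hh'val]
    field_simp
    linear_combination hs2
  have hrpow : ((s ^ 2)⁻¹ : ℝ) ^ ((3 : ℝ) / 2) = (s ^ 3)⁻¹ := by
    rw [Real.inv_rpow (by positivity), ← Real.rpow_natCast s 2, ← Real.rpow_mul hspos.le]
    norm_num
  rw [hX, hh'val, hrpow]
  have hf2M : f M r = 1 - 2 * M / r := rfl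
  have hpval : p = H * r + c1 / r ^ 2 := rfl
  have hp'val : p' = H - 2 * c1 / r ^ 3 := rfl
  have hQ'val : Q' = 2 * M / r ^ 2 + 2 * p * p' := rfl
  have hkey : p' * r + 2 * p = 3 * H * r := by
    simp only [hp', hp, P]
    field_simp
    ring
  clear_value p p' s Q'
  rw [hQ']
  linear_combination (norm := (field_simp; ring)) (p' / (f M r * s ^ 3)) * hs2 +
    (1 / (r * s ^ 3)) * hkey
end

section
/- For every r > 2M, the tangential component of the spacetime second fundamental form of the sphere of symmetry on the exterior CMC slice, namely K̂₁₁(r) = ((r − 2M)·h'(r)/r²)·(f(r)⁻¹ − h'(r)²·f(r))^(−1/2), equals Ĥ + c₁/r³. In particular, when c₁ = 0 one has K̂₁₁(r) = Ĥ for all r > 2M (the slice is spacetime umbilical). -/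
open Real Filter Topology Set

/-- Tangential component of the spacetime second fundamental form of the sphere of
symmetry on the exterior CMC slice:
`K̂₁₁(r) = ((r − 2M)h'(r)/r²)·(f(r)⁻¹ − h'(r)²f(r))^(−1/2)`. -/
noncomputable def Khat11 (M H c1 r : ℝ) : ℝ :=
  ((r - 2 * M) * h' M H c1 r / r ^ 2) *
    ((f M r)⁻¹ - (h' M H c1 r) ^ 2 * f M r) ^ (-(1 : ℝ) / 2)

/-- For every `r > 2M`, `K̂₁₁(r) = Ĥ + c₁/r³`; in particular, when `c₁ = 0` one has
`K̂₁₁(r) = Ĥ` for all `r > 2M` (the slice is spacetime umbilical). -/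
theorem exterior_cmc_Khat11 (M H c1 : ℝ) (hM : 0 < M) :
    (∀ r : ℝ, 2 * M < r → Khat11 M H c1 r = H + c1 / r ^ 3) ∧
    (c1 = 0 → ∀ r : ℝ, 2 * M < r → Khat11 M H c1 r = H) := by
  have main : ∀ r : ℝ, 2 * M < r → Khat11 M H c1 r = H + c1 / r ^ 3 := by
    intro r hr
    have hr0 : 0 < r := lt_trans (by positivity) hr
    have hrm : 0 < r - 2 * M := by linarith
    have hf : f M r = (r - 2 * M) / r := by unfold f; field_simp
    have hfpos : 0 < f M r := by rw [hf]; positivity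
    set p := P H c1 r with hp
    have hq : 0 < f M r + p ^ 2 := by positivity
    set s := Real.sqrt (f M r + p ^ 2) with hs
    have hspos : 0 < s := Real.sqrt_pos.2 hq
    have hs2 : s ^ 2 = f M r + p ^ 2 := Real.sq_sqrt hq.le
    have hh : h' M H c1 r = p / (f M r * s) := rfl
    have key : (f M r)⁻¹ - (h' M H c1 r) ^ 2 * f M r = (s ^ 2)⁻¹ := by
      rw [hh]
      field_simp
      linear_combination hs2
    have hrpow : ((s ^ 2)⁻¹ : ℝ) ^ (-(1 : ℝ) / 2) = s := by
      rw [show (-(1 : ℝ) / 2) = -(1 / 2) by ring,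
        Real.rpow_neg (by positivity), ← Real.sqrt_eq_rpow,
        Real.sqrt_inv, Real.sqrt_sq hspos.le, inv_inv]
    rw [Khat11, key, hrpow, hh, hf]
    have hP : p = H * r + c1 / r ^ 2 := rfl
    rw [hP]
    field_simp
  exact ⟨main, fun hc r hr => by rw [main r hr, hc]; simp⟩
end

section
/- If Ĥ ≠ 0, then lim_{r→∞} h'(r) = 1 when Ĥ > 0 and lim_{r→∞} h'(r) = −1 when Ĥ < 0; moreover lim_{r→∞} (f(r)⁻¹ − f(r)·h'(r)²) = 0, i.e. the norm of the normal ḡ^{μν}∂_μ t̂ ∂_ν t̂ = −(f⁻¹ − f h'²) tends to 0 and the CMC slice becomes asymptotically null as r → ∞. -/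
open Real Filter Topology Set

lemma tendsto_f (M : ℝ) : Tendsto (f M) atTop (𝓝 1) := by
  have : Tendsto (fun r : ℝ => 2 * M / r) atTop (𝓝 0) :=
    Tendsto.div_atTop tendsto_const_nhds tendsto_id
  show Tendsto (fun r => 1 - 2 * M / r) atTop (𝓝 1)
  simpa [f] using tendsto_const_nhds.sub this

lemma eventually_f_pos (M : ℝ) : ∀ᶠ r in atTop, 0 < f M r :=
  (tendsto_f M).eventually (eventually_gt_nhds one_pos)

lemma tendsto_P_atTop (H c1 : ℝ) (hH : 0 < H) : Tendsto (P H c1) atTop atTop := by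
  have h1 : Tendsto (fun r : ℝ => H * r) atTop atTop :=
    Tendsto.const_mul_atTop hH tendsto_id
  have h2 : Tendsto (fun r : ℝ => c1 / r ^ 2) atTop (𝓝 0) :=
    Tendsto.div_atTop tendsto_const_nhds (tendsto_pow_atTop two_ne_zero)
  show Tendsto (fun r => H * r + c1 / r ^ 2) atTop atTop
  simpa [P] using h1.atTop_add h2

lemma tendsto_P_atBot (H c1 : ℝ) (hH : H < 0) : Tendsto (P H c1) atTop atBot := by
  have h1 : Tendsto (fun r : ℝ => H * r) atTop atBot :=
    (tendsto_const_mul_atBot_of_neg hH).2 tendsto_id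
  have h2 : Tendsto (fun r : ℝ => c1 / r ^ 2) atTop (𝓝 0) :=
    Tendsto.div_atTop tendsto_const_nhds (tendsto_pow_atTop two_ne_zero)
  show Tendsto (fun r => H * r + c1 / r ^ 2) atTop atBot
  simpa [P] using h1.atBot_add h2

lemma tendsto_Psq (H c1 : ℝ) (hH : H ≠ 0) :
    Tendsto (fun r => (P H c1 r) ^ 2) atTop atTop := by
  rcases hH.lt_or_gt with h | h
  · have := (tendsto_P_atBot H c1 h)
    have habs : Tendsto (fun r => |P H c1 r|) atTop atTop :=
      tendsto_abs_atBot_atTop.comp this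
    have : Tendsto (fun r => |P H c1 r| ^ 2) atTop atTop :=
      (tendsto_pow_atTop two_ne_zero).comp habs
    simpa [sq_abs] using this
  · have := (tendsto_P_atTop H c1 h)
    exact (tendsto_pow_atTop two_ne_zero).comp this

/-- If `Ĥ ≠ 0`, then `h'(r) → 1` as `r → ∞` when `Ĥ > 0`, `h'(r) → −1` when `Ĥ < 0`,
and `f(r)⁻¹ − f(r)h'(r)² → 0`: the norm of the normal tends to `0` and the CMC slice
becomes asymptotically null as `r → ∞`. -/
theorem exterior_cmc_asymptotically_null (M H c1 : ℝ) (hM : 0 < M) (hH : H ≠ 0) :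
    (0 < H → Tendsto (h' M H c1) atTop (𝓝 1)) ∧
    (H < 0 → Tendsto (h' M H c1) atTop (𝓝 (-1))) ∧
    Tendsto (fun r => (f M r)⁻¹ - f M r * (h' M H c1 r) ^ 2) atTop (𝓝 0) := by

  have hPsq := tendsto_Psq H c1 hH
  have hfpos := eventually_f_pos M
  have hf := tendsto_f M
  -- the common limit (f * sqrt(f/P² + 1))⁻¹ → 1
  have hinner : Tendsto (fun r => f M r / (P H c1 r) ^ 2 + 1) atTop (𝓝 1) := by
    have h0 : Tendsto (fun r => f M r / (P H c1 r) ^ 2) atTop (𝓝 0) :=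
      Tendsto.div_atTop hf hPsq
    simpa using h0.add tendsto_const_nhds
  have hsqrt : Tendsto (fun r => Real.sqrt (f M r / (P H c1 r) ^ 2 + 1)) atTop (𝓝 1) := by
    have := (Real.continuous_sqrt.tendsto 1).comp hinner
    simpa [Function.comp_def] using this
  have hmain : Tendsto (fun r => (f M r * Real.sqrt (f M r / (P H c1 r) ^ 2 + 1))⁻¹)
      atTop (𝓝 1) := by
    have := (hf.mul hsqrt).inv₀ (by norm_num)
    simpa using this
  refine ⟨?_, ?_, ?_⟩
  · intro hHpos
    have hPpos : ∀ᶠ r in atTop, 0 < P H c1 r :=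
      (tendsto_P_atTop H c1 hHpos).eventually_gt_atTop 0
    have heq : ∀ᶠ r in atTop,
        h' M H c1 r = (f M r * Real.sqrt (f M r / (P H c1 r) ^ 2 + 1))⁻¹ := by
      filter_upwards [hfpos, hPpos] with r hfr hPr
      have hP2 : (0:ℝ) < (P H c1 r) ^ 2 := by positivity
      have hs : Real.sqrt (f M r + (P H c1 r) ^ 2)
          = P H c1 r * Real.sqrt (f M r / (P H c1 r) ^ 2 + 1) := by
        rw [← Real.sqrt_sq hPr.le, ← Real.sqrt_mul (sq_nonneg _)]
        congr 1
        field_simp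
        exact Real.sq_sqrt (sq_nonneg _)
      rw [h', hs]
      have hsq : 0 < Real.sqrt (f M r / (P H c1 r) ^ 2 + 1) := by
        apply Real.sqrt_pos.2; positivity
      field_simp
    exact hmain.congr' (heq.mono fun r h => h.symm)
  · intro hHneg
    have hPneg : ∀ᶠ r in atTop, P H c1 r < 0 :=
      (tendsto_P_atBot H c1 hHneg).eventually_lt_atBot 0
    have heq : ∀ᶠ r in atTop,
        h' M H c1 r = -(f M r * Real.sqrt (f M r / (P H c1 r) ^ 2 + 1))⁻¹ := by
      filter_upwards [hfpos, hPneg] with r hfr hPr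
      have hP2 : (0:ℝ) < (P H c1 r) ^ 2 := sq_pos_of_ne_zero hPr.ne
      have hs : Real.sqrt (f M r + (P H c1 r) ^ 2)
          = -P H c1 r * Real.sqrt (f M r / (P H c1 r) ^ 2 + 1) := by
        rw [← Real.sqrt_sq (neg_nonneg.2 hPr.le), ← Real.sqrt_mul (sq_nonneg _)]
        congr 1
        field_simp
        rw [mul_add, mul_div_cancel₀ _ hP2.ne', mul_one, add_comm]
      rw [h', hs]
      have hsq : 0 < Real.sqrt (f M r / (P H c1 r) ^ 2 + 1) := by
        apply Real.sqrt_pos.2; positivity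
      have hPne : P H c1 r ≠ 0 := hPr.ne
      field_simp
    have : Tendsto (fun r => -(f M r * Real.sqrt (f M r / (P H c1 r) ^ 2 + 1))⁻¹)
        atTop (𝓝 (-1)) := hmain.neg
    exact this.congr' (heq.mono fun r h => h.symm)
  · have heq : ∀ᶠ r in atTop,
        (f M r)⁻¹ - f M r * (h' M H c1 r) ^ 2 = (f M r + (P H c1 r) ^ 2)⁻¹ := by
      filter_upwards [hfpos] with r hfr
      have hfp : 0 < f M r + (P H c1 r) ^ 2 := by positivity
      have hs : Real.sqrt (f M r + (P H c1 r) ^ 2) ^ 2 = f M r + (P H c1 r) ^ 2 :=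
        Real.sq_sqrt hfp.le
      have hspos : 0 < Real.sqrt (f M r + (P H c1 r) ^ 2) := Real.sqrt_pos.2 hfp
      rw [h']
      rw [div_pow, mul_pow, hs]
      field_simp
      ring
    have hlim : Tendsto (fun r => (f M r + (P H c1 r) ^ 2)⁻¹) atTop (𝓝 0) := by
      have : Tendsto (fun r => f M r + (P H c1 r) ^ 2) atTop atTop := hf.add_atTop hPsq
      exact this.inv_tendsto_atTop
    exact hlim.congr' (heq.mono fun r h => h.symm)
end

section
/- If c₁ = −8M³Ĥ, then for every r > 2M the CMC slope satisfies h'(r) = Ĥ·√(r/(r − 2M))·√( r·(r² + 2Mr + 4M²)² / ( r³ + Ĥ²·(r − 2M)·(r² + 2Mr + 4M²)² ) ); in particular the function r ↦ √(r − 2M)·h'(r) stays bounded as r → 2M⁺, i.e. h'(r) = O((r − 2M)^(−1/2)) near the event horizon. -/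
open Real Filter Topology Set

lemma key (M H c1 : ℝ) (hM : 0 < M) (hc : c1 = -8 * M ^ 3 * H) (r : ℝ) (hr : 2 * M < r) :
    h' M H c1 r = H * Real.sqrt (r / (r - 2 * M)) *
        Real.sqrt (r * (r ^ 2 + 2 * M * r + 4 * M ^ 2) ^ 2 /
          (r ^ 3 + H ^ 2 * (r - 2 * M) * (r ^ 2 + 2 * M * r + 4 * M ^ 2) ^ 2)) := by
  have hr0 : 0 < r := by nlinarith
  have hs : 0 < r - 2 * M := by linarith
  set A : ℝ := r ^ 2 + 2 * M * r + 4 * M ^ 2 with hA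
  set D : ℝ := r ^ 3 + H ^ 2 * (r - 2 * M) * A ^ 2 with hD
  have hApos : 0 < A := by positivity
  have hDpos : 0 < D := by positivity
  have hf : f M r = (r - 2 * M) / r := by unfold f; field_simp
  have hP : P H c1 r = H * (r - 2 * M) * A / r ^ 2 := by
    unfold P; rw [hc, hA]; field_simp; ring
  have hfP : f M r + (P H c1 r) ^ 2 = (r - 2 * M) * D / r ^ 4 := by
    rw [hf, hP, hD]; field_simp
  have hsq : Real.sqrt ((r - 2 * M) * D / r ^ 4) =
      Real.sqrt (r - 2 * M) * Real.sqrt D / r ^ 2 := by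
    rw [show (r - 2 * M) * D / r ^ 4 = (Real.sqrt (r - 2 * M) * Real.sqrt D / r ^ 2) ^ 2 by
      rw [div_pow, mul_pow, Real.sq_sqrt hs.le, Real.sq_sqrt hDpos.le]; ring]
    exact Real.sqrt_sq (by positivity)
  have h1 : Real.sqrt (r / (r - 2 * M)) = Real.sqrt r / Real.sqrt (r - 2 * M) :=
    Real.sqrt_div hr0.le _
  have h2 : Real.sqrt (r * A ^ 2 / D) = Real.sqrt r * A / Real.sqrt D := by
    rw [Real.sqrt_div (by positivity), Real.sqrt_mul hr0.le, Real.sqrt_sq hApos.le]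
  unfold h'
  rw [hfP, hsq, hf, hP, h1, h2]
  have ha : Real.sqrt (r - 2 * M) ≠ 0 := by positivity
  have hb : Real.sqrt D ≠ 0 := by positivity
  have hc2 : Real.sqrt r ^ 2 = r := Real.sq_sqrt hr0.le
  field_simp
  linear_combination (-H) * hc2

/-- If `c₁ = −8M³Ĥ`, then for every `r > 2M`,
`h'(r) = Ĥ·√(r/(r − 2M))·√(r(r² + 2Mr + 4M²)²/(r³ + Ĥ²(r − 2M)(r² + 2Mr + 4M²)²))`;
in particular `√(r − 2M)·h'(r)` stays bounded as `r → 2M⁺`, i.e.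
`h'(r) = O((r − 2M)^(−1/2))` near the event horizon. -/
theorem exterior_cmc_horizon_behaviour (M H c1 : ℝ) (hM : 0 < M)
    (hc : c1 = -8 * M ^ 3 * H) :
    (∀ r : ℝ, 2 * M < r →
      h' M H c1 r = H * Real.sqrt (r / (r - 2 * M)) *
        Real.sqrt (r * (r ^ 2 + 2 * M * r + 4 * M ^ 2) ^ 2 /
          (r ^ 3 + H ^ 2 * (r - 2 * M) * (r ^ 2 + 2 * M * r + 4 * M ^ 2) ^ 2))) ∧
    ∃ C : ℝ, ∀ᶠ r in 𝓝[>] (2 * M), |Real.sqrt (r - 2 * M) * h' M H c1 r| ≤ C := by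
  refine ⟨fun r hr => key M H c1 hM hc r hr, ?_⟩
  set g : ℝ → ℝ := fun r => H * Real.sqrt r *
    Real.sqrt (r * (r ^ 2 + 2 * M * r + 4 * M ^ 2) ^ 2 /
      (r ^ 3 + H ^ 2 * (r - 2 * M) * (r ^ 2 + 2 * M * r + 4 * M ^ 2) ^ 2)) with hg
  have hcont : ContinuousAt g (2 * M) := by
    have hD : (2 * M) ^ 3 + H ^ 2 * (2 * M - 2 * M) * ((2 * M) ^ 2 + 2 * M * (2 * M) + 4 * M ^ 2) ^ 2 ≠ 0 := by
      have : (2 * M) ^ 3 + H ^ 2 * (2 * M - 2 * M) * ((2 * M) ^ 2 + 2 * M * (2 * M) + 4 * M ^ 2) ^ 2 = 8 * M ^ 3 := by ring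
      rw [this]; positivity
    apply ContinuousAt.mul
    · exact (continuousAt_const.mul Real.continuous_sqrt.continuousAt)
    · exact Real.continuous_sqrt.continuousAt.comp
        (ContinuousAt.div (by fun_prop) (by fun_prop) hD)
  have hb : ∀ᶠ x in 𝓝 (2 * M), |g x| ≤ |g (2 * M)| + 1 := by
    have := Metric.tendsto_nhds.mp hcont 1 one_pos
    filter_upwards [this] with x hx
    rw [Real.dist_eq] at hx
    calc |g x| = |g x - g (2 * M) + g (2 * M)| := by ring_nf
    _ ≤ |g x - g (2 * M)| + |g (2 * M)| := abs_add_le _ _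
    _ ≤ |g (2 * M)| + 1 := by linarith
  refine ⟨|g (2 * M)| + 1, ?_⟩
  filter_upwards [nhdsWithin_le_nhds hb, self_mem_nhdsWithin] with r hr hmem
  have hr2 : 2 * M < r := hmem
  have hs : 0 < r - 2 * M := by linarith
  have hr0 : 0 < r := by nlinarith
  have heq : Real.sqrt (r - 2 * M) * h' M H c1 r = g r := by
    rw [key M H c1 hM hc r hr2, hg]
    have h3 : Real.sqrt (r - 2 * M) * Real.sqrt (r / (r - 2 * M)) = Real.sqrt r := by
      rw [← Real.sqrt_mul hs.le]
      congr 1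
      field_simp
    set q := Real.sqrt (r * (r ^ 2 + 2 * M * r + 4 * M ^ 2) ^ 2 /
      (r ^ 3 + H ^ 2 * (r - 2 * M) * (r ^ 2 + 2 * M * r + 4 * M ^ 2) ^ 2)) with hq
    calc Real.sqrt (r - 2 * M) * (H * Real.sqrt (r / (r - 2 * M)) * q)
        = H * (Real.sqrt (r - 2 * M) * Real.sqrt (r / (r - 2 * M))) * q := by ring
      _ = H * Real.sqrt r * q := by rw [h3]
  rw [heq]
  exact hr
end

section
/- For every r > 2M and all constants Ĥ, c₁ ∈ ℝ, the spacetime Hawking mass of the sphere of symmetry on the exterior CMC slice satisfies m_H^st(r) = M identically, and the Liu–Yau mass satisfies m_LY(r) = r·(1 − √(f(r))), independently of Ĥ and c₁. -/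
open Real Filter Topology Set

/-- Hawking mass `m_H(r) = (r/2)(1 − (f⁻¹ − f h'²)⁻¹)`. -/
noncomputable def mH (M H c1 r : ℝ) : ℝ :=
  r / 2 * (1 - ((f M r)⁻¹ - f M r * (h' M H c1 r) ^ 2)⁻¹)

/-- Brown–York mass `m_BY(r) = r(1 − (f⁻¹ − f h'²)^(−1/2))`. -/
noncomputable def mBY (M H c1 r : ℝ) : ℝ :=
  r * (1 - ((f M r)⁻¹ - f M r * (h' M H c1 r) ^ 2) ^ (-(1 : ℝ) / 2))

/-- Liu–Yau mass `m_LY(r) = r(1 − (1 − f² h'²)^(1/2)·(f⁻¹ − f h'²)^(−1/2))`. -/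
noncomputable def mLY (M H c1 r : ℝ) : ℝ :=
  r * (1 - (1 - (f M r) ^ 2 * (h' M H c1 r) ^ 2) ^ ((1 : ℝ) / 2) *
    ((f M r)⁻¹ - f M r * (h' M H c1 r) ^ 2) ^ (-(1 : ℝ) / 2))

/-- Spacetime Hawking mass `m_H^st(r) = (r/2)(1 − (1 − f² h'²)(f⁻¹ − f h'²)⁻¹)`. -/
noncomputable def mHst (M H c1 r : ℝ) : ℝ :=
  r / 2 * (1 - (1 - (f M r) ^ 2 * (h' M H c1 r) ^ 2) *
    ((f M r)⁻¹ - f M r * (h' M H c1 r) ^ 2)⁻¹)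

/-- For every `r > 2M` and all constants `Ĥ, c₁ ∈ ℝ`, the spacetime Hawking mass of
the sphere of symmetry on the exterior CMC slice satisfies `m_H^st(r) = M`
identically, and the Liu–Yau mass satisfies `m_LY(r) = r(1 − √(f(r)))`,
independently of `Ĥ` and `c₁`. -/
theorem spacetime_hawking_const (M : ℝ) (hM : 0 < M) :
    ∀ (H c1 r : ℝ), 2 * M < r →
      mHst M H c1 r = M ∧ mLY M H c1 r = r * (1 - Real.sqrt (f M r)) := by
  intro H c1 r hr
  have hr0 : 0 < r := lt_trans (by linarith) hr
  have hf : 0 < f M r := by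
    have : 2 * M / r < 1 := (div_lt_one hr0).mpr hr
    simp only [f]; linarith
  set p := P H c1 r with hp
  have hs2 : 0 < f M r + p ^ 2 := by positivity
  set s := Real.sqrt (f M r + p ^ 2) with hsdef
  have hs : 0 < s := Real.sqrt_pos.mpr hs2
  have hssq : s ^ 2 = f M r + p ^ 2 := Real.sq_sqrt hs2.le
  have hA : (f M r)⁻¹ - f M r * (h' M H c1 r) ^ 2 = (s ^ 2)⁻¹ := by
    rw [h', ← hp, ← hsdef, hssq]
    field_simp
    linear_combination p ^ 2 * hssq
  have hB : 1 - (f M r) ^ 2 * (h' M H c1 r) ^ 2 = f M r / s ^ 2 := by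
    rw [h', ← hp, ← hsdef]
    field_simp
    linear_combination hssq
  constructor
  · rw [mHst, hA, hB, inv_inv]
    have hfeq : f M r = 1 - 2 * M / r := rfl
    field_simp [hfeq]
    have hrm : r * (2 * M / r) = 2 * M := by rw [mul_comm]; exact div_mul_cancel₀ _ hr0.ne'
    rw [hfeq]; linear_combination hrm
  · rw [mLY, hA, hB]
    have h1 : ((s ^ 2)⁻¹ : ℝ) ^ (-(1 : ℝ) / 2) = s := by
      rw [show (-(1:ℝ)/2) = -(1/2) by ring, Real.rpow_neg (by positivity),
        ← Real.sqrt_eq_rpow, Real.sqrt_inv, Real.sqrt_sq hs.le, inv_inv]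
    have h2' : (f M r / s ^ 2 : ℝ) ^ ((1 : ℝ) / 2) = Real.sqrt (f M r) / s := by
      rw [← Real.sqrt_eq_rpow, Real.sqrt_div hf.le, Real.sqrt_sq hs.le]
    rw [h1, h2', div_mul_cancel₀ _ (ne_of_gt hs)]
end

section
/- If c₁ ≥ −8M³Ĥ (equivalently 2MĤ + c₁/(4M²) ≥ 0), then the Brown–York mass of the spheres of symmetry on the exterior CMC slice has the horizon limit lim_{r→2M⁺} m_BY(r) = 2M·(1 − 2MĤ − c₁/(4M²)). -/
open Real Filter Topology Set

lemma mBY_eq (M H c1 : ℝ) (hM : 0 < M) {r : ℝ} (hr : 2 * M < r) :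
    mBY M H c1 r = r * (1 - Real.sqrt (f M r + (P H c1 r) ^ 2)) := by
  have hr0 : 0 < r := lt_trans (by positivity) hr
  have hf : 0 < f M r := by
    have : 2 * M / r < 1 := (div_lt_one hr0).mpr hr
    simp [f]; linarith
  have hfp : 0 < f M r + (P H c1 r) ^ 2 := by positivity
  have hsq : Real.sqrt (f M r + (P H c1 r) ^ 2) ^ 2 = f M r + (P H c1 r) ^ 2 :=
    Real.sq_sqrt hfp.le
  have key : (f M r)⁻¹ - f M r * (h' M H c1 r) ^ 2 = (f M r + (P H c1 r) ^ 2)⁻¹ := by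
    rw [h', div_pow, mul_pow, hsq]
    field_simp
    ring
  rw [mBY, key]
  congr 2
  rw [show (-(1 : ℝ) / 2) = -(1/2) by ring, Real.rpow_neg (by positivity),
    Real.inv_rpow hfp.le, inv_inv, ← Real.sqrt_eq_rpow]

/-- If `c₁ ≥ −8M³Ĥ` (equivalently `2MĤ + c₁/(4M²) ≥ 0`), then the Brown–York mass of
the spheres of symmetry on the exterior CMC slice has the horizon limit
`lim_{r→2M⁺} m_BY(r) = 2M(1 − 2MĤ − c₁/(4M²))`. -/
theorem brown_york_horizon_limit (M H c1 : ℝ) (hM : 0 < M)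
    (hc : -8 * M ^ 3 * H ≤ c1) :
    Tendsto (mBY M H c1) (𝓝[>] (2 * M))
      (𝓝 (2 * M * (1 - 2 * M * H - c1 / (4 * M ^ 2)))) := by
  have hM2 : (0:ℝ) < 2 * M := by positivity
  have hP0 : P H c1 (2 * M) = 2 * M * H + c1 / (4 * M ^ 2) := by
    rw [P]; ring_nf
  have hPnn : 0 ≤ P H c1 (2 * M) := by
    rw [hP0]
    have h4 : (0:ℝ) < 4 * M ^ 2 := by positivity
    have : 0 ≤ (8 * M ^ 3 * H + c1) / (4 * M ^ 2) :=
      div_nonneg (by linarith) h4.le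
    calc (0:ℝ) ≤ (8 * M ^ 3 * H + c1) / (4 * M ^ 2) := this
      _ = 2 * M * H + c1 / (4 * M ^ 2) := by field_simp; ring
  have hcont : ContinuousAt (fun r => r * (1 - Real.sqrt (f M r + (P H c1 r) ^ 2))) (2 * M) := by
    apply ContinuousAt.mul continuousAt_id
    apply ContinuousAt.sub continuousAt_const
    apply Real.continuous_sqrt.continuousAt.comp
    exact ContinuousAt.add
      (continuousAt_const.sub (continuousAt_const.div continuousAt_id hM2.ne'))
      ((continuousAt_const.mul continuousAt_id).add
        (continuousAt_const.div (continuousAt_id.pow 2) (pow_ne_zero 2 hM2.ne'))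
        |>.pow 2)
  have hf0 : f M (2 * M) = 0 := by rw [f]; field_simp; ring
  have hval : 2 * M * (1 - Real.sqrt (f M (2 * M) + P H c1 (2 * M) ^ 2))
      = 2 * M * (1 - 2 * M * H - c1 / (4 * M ^ 2)) := by
    rw [hf0, zero_add, Real.sqrt_sq_eq_abs, abs_of_nonneg hPnn, hP0]; ring
  have := hcont.tendsto
  rw [hval] at this
  exact (this.mono_left nhdsWithin_le_nhds).congr'
    (eventually_nhdsWithin_of_forall fun r hr => (mBY_eq M H c1 hM hr).symm)
end

section
/- For all constants Ĥ, c₁ ∈ ℝ, the Liu–Yau mass of the spheres of symmetry on the exterior CMC slice has the horizon limit lim_{r→2M⁺} m_LY(r) = 2M. -/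
open Real Filter Topology Set

lemma mLY_eq (M H c1 r : ℝ) (hM : 0 < M) (hr : 2 * M < r) :
    mLY M H c1 r = r * (1 - Real.sqrt (f M r)) := by
  have hr0 : 0 < r := lt_trans (by positivity) hr
  have hf : 0 < f M r := by
    have : 2 * M / r < 1 := (div_lt_one hr0).2 hr
    unfold f; linarith
  set fr := f M r with hfr
  set p := P H c1 r with hp
  have hs : 0 < fr + p ^ 2 := by positivity
  set s := fr + p ^ 2 with hsdef
  have hsq : Real.sqrt s ^ 2 = s := Real.sq_sqrt hs.le
  have hsqrt_pos : 0 < Real.sqrt s := Real.sqrt_pos.2 hs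
  have hh2 : (h' M H c1 r) ^ 2 = p ^ 2 / (fr ^ 2 * s) := by
    rw [h', div_pow, mul_pow, hsq]
  have hA : (fr)⁻¹ - fr * (h' M H c1 r) ^ 2 = s⁻¹ := by
    rw [hh2]
    field_simp
    ring_nf
    linarith
  have hB : 1 - fr ^ 2 * (h' M H c1 r) ^ 2 = fr / s := by
    rw [hh2]
    field_simp
    rw [hsdef]; ring
  rw [mLY, hA, hB]
  have h1 : (s⁻¹ : ℝ) ^ (-(1 : ℝ) / 2) = s ^ ((1 : ℝ) / 2) := by
    rw [neg_div, Real.rpow_neg (inv_nonneg.2 hs.le), Real.inv_rpow hs.le, inv_inv]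
  have h2 : (fr / s) ^ ((1 : ℝ) / 2) = fr ^ ((1 : ℝ) / 2) / s ^ ((1 : ℝ) / 2) :=
    Real.div_rpow hf.le hs.le _
  have hspow : (0 : ℝ) < s ^ ((1 : ℝ) / 2) := Real.rpow_pos_of_pos hs _
  rw [h1, h2, div_mul_cancel₀ _ hspow.ne', Real.sqrt_eq_rpow]

/-- For all constants `Ĥ, c₁ ∈ ℝ`, the Liu–Yau mass of the spheres of symmetry on the
exterior CMC slice has the horizon limit `lim_{r→2M⁺} m_LY(r) = 2M`. -/
theorem liu_yau_horizon_limit (M H c1 : ℝ) (hM : 0 < M) :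
    Tendsto (mLY M H c1) (𝓝[>] (2 * M)) (𝓝 (2 * M)) := by
  have heq : mLY M H c1 =ᶠ[𝓝[>] (2 * M)] fun r => r * (1 - Real.sqrt (f M r)) := by
    filter_upwards [self_mem_nhdsWithin] with r hr
    exact mLY_eq M H c1 r hM hr
  have hcont : ContinuousAt (fun r => r * (1 - Real.sqrt (f M r))) (2 * M) := by
    have hM0 : (2 * M) ≠ 0 := by positivity
    have hcf : ContinuousAt (f M) (2 * M) := by
      unfold f
      exact continuousAt_const.sub (continuousAt_const.div continuousAt_id hM0)
    exact continuousAt_id.mul (continuousAt_const.sub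
      (Real.continuous_sqrt.continuousAt.comp hcf))
  have hval : 2 * M * (1 - Real.sqrt (f M (2 * M))) = 2 * M := by
    have : f M (2 * M) = 0 := by
      unfold f
      field_simp
      norm_num
    simp [this]
  have := hcont.continuousWithinAt (s := Ioi (2 * M))
  rw [ContinuousWithinAt, hval] at this
  exact Tendsto.congr' heq.symm this
end

section
/- If c₁ = −8M³Ĥ, then the three quasi-local masses on the exterior CMC slice have the following limits at the event horizon: lim_{r→2M⁺} m_H(r) = M, lim_{r→2M⁺} m_BY(r) = 2M, and lim_{r→2M⁺} m_LY(r) = 2M. -/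
open Real Filter Topology Set

lemma f_pos (M r : ℝ) (hM : 0 < M) (hr : 2 * M < r) : 0 < f M r := by
  have hr0 : 0 < r := lt_trans (by positivity) hr
  unfold f
  rw [sub_pos, div_lt_one hr0]
  exact hr

lemma key_Q (M H c1 r : ℝ) (hM : 0 < M) (hr : 2 * M < r) :
    (f M r)⁻¹ - f M r * (h' M H c1 r) ^ 2 = (f M r + (P H c1 r) ^ 2)⁻¹ := by
  have ha : 0 < f M r := f_pos M r hM hr
  have hfp : 0 < f M r + (P H c1 r) ^ 2 := by positivity
  have hs : Real.sqrt (f M r + (P H c1 r) ^ 2) ^ 2 = f M r + (P H c1 r) ^ 2 :=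
    Real.sq_sqrt hfp.le
  have hs0 : (0:ℝ) < Real.sqrt (f M r + (P H c1 r) ^ 2) := Real.sqrt_pos.mpr hfp
  unfold h'
  field_simp
  rw [hs]; ring

lemma key_R (M H c1 r : ℝ) (hM : 0 < M) (hr : 2 * M < r) :
    1 - (f M r) ^ 2 * (h' M H c1 r) ^ 2 = f M r * (f M r + (P H c1 r) ^ 2)⁻¹ := by
  have ha : 0 < f M r := f_pos M r hM hr
  have hfp : 0 < f M r + (P H c1 r) ^ 2 := by positivity
  have hs : Real.sqrt (f M r + (P H c1 r) ^ 2) ^ 2 = f M r + (P H c1 r) ^ 2 :=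
    Real.sq_sqrt hfp.le
  have hs0 : (0:ℝ) < Real.sqrt (f M r + (P H c1 r) ^ 2) := Real.sqrt_pos.mpr hfp
  unfold h'
  field_simp
  rw [hs]; ring

/-- If `c₁ = −8M³Ĥ`, then the three quasi-local masses on the exterior CMC slice have
the following limits at the event horizon: `lim_{r→2M⁺} m_H(r) = M`,
`lim_{r→2M⁺} m_BY(r) = 2M`, and `lim_{r→2M⁺} m_LY(r) = 2M`. -/
theorem masses_horizon_limits_special (M H c1 : ℝ) (hM : 0 < M)
    (hc : c1 = -8 * M ^ 3 * H) :
    Tendsto (mH M H c1) (𝓝[>] (2 * M)) (𝓝 M) ∧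
    Tendsto (mBY M H c1) (𝓝[>] (2 * M)) (𝓝 (2 * M)) ∧
    Tendsto (mLY M H c1) (𝓝[>] (2 * M)) (𝓝 (2 * M)) := by
  have h2M : (0:ℝ) < 2 * M := by positivity
  set g : ℝ → ℝ := fun r => f M r + (P H c1 r) ^ 2 with hg_def
  have hf_cont : ContinuousAt (f M) (2 * M) := by
    unfold f
    exact continuousAt_const.sub (continuousAt_const.div continuousAt_id h2M.ne')
  have hP_cont : ContinuousAt (P H c1) (2 * M) := by
    unfold P
    exact (continuousAt_const.mul continuousAt_id).add
      (continuousAt_const.div (continuousAt_id.pow 2) (by positivity))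
  have hf0 : f M (2 * M) = 0 := by unfold f; field_simp; norm_num
  have hP0 : P H c1 (2 * M) = 0 := by
    unfold P; rw [hc]; field_simp; ring
  have hg_cont : ContinuousAt g (2 * M) := hf_cont.add (hP_cont.pow 2)
  have hg0 : g (2 * M) = 0 := by simp [hg_def, hf0, hP0]
  have hgt : Tendsto g (𝓝[>] (2 * M)) (𝓝 0) := by
    rw [← hg0]
    exact hg_cont.continuousWithinAt.tendsto
  have hft : Tendsto (f M) (𝓝[>] (2 * M)) (𝓝 0) := by
    rw [← hf0]
    exact hf_cont.continuousWithinAt.tendsto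
  have hgpos : ∀ r ∈ Ioi (2 * M), 0 < g r := fun r hr => by
    have := f_pos M r hM hr
    positivity
  refine ⟨?_, ?_, ?_⟩
  · -- Hawking
    have heq : ∀ r ∈ Ioi (2 * M), mH M H c1 r = r / 2 * (1 - g r) := fun r hr => by
      unfold mH
      rw [key_Q M H c1 r hM hr, inv_inv]
    refine Tendsto.congr' (eventuallyEq_nhdsWithin_of_eqOn fun r hr => (heq r hr).symm) ?_
    · have : Tendsto (fun r : ℝ => r / 2 * (1 - g r)) (𝓝[>] (2 * M))
          (𝓝 (2 * M / 2 * (1 - 0))) := by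
        apply Tendsto.mul
        · exact (tendsto_nhdsWithin_of_tendsto_nhds (continuousAt_id.div_const 2))
        · exact tendsto_const_nhds.sub hgt
      simpa using this
  · -- Brown–York
    have heq : ∀ r ∈ Ioi (2 * M), mBY M H c1 r = r * (1 - Real.sqrt (g r)) := fun r hr => by
      unfold mBY
      rw [key_Q M H c1 r hM hr]
      congr 2
      rw [show (-(1:ℝ)/2) = -(1/2) by norm_num,
        Real.rpow_neg (inv_nonneg.mpr (hgpos r hr).le), Real.inv_rpow (hgpos r hr).le,
        inv_inv, Real.sqrt_eq_rpow]
    refine Tendsto.congr' (eventuallyEq_nhdsWithin_of_eqOn fun r hr => (heq r hr).symm) ?_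
    have : Tendsto (fun r : ℝ => r * (1 - Real.sqrt (g r))) (𝓝[>] (2 * M))
        (𝓝 (2 * M * (1 - Real.sqrt 0))) := by
      apply Tendsto.mul (tendsto_nhdsWithin_of_tendsto_nhds tendsto_id)
      exact tendsto_const_nhds.sub (Real.continuous_sqrt.continuousAt.tendsto.comp hgt)
    simpa using this
  · -- Liu–Yau
    have heq : ∀ r ∈ Ioi (2 * M), mLY M H c1 r = r * (1 - Real.sqrt (f M r)) := fun r hr => by
      have hfp : 0 < f M r := f_pos M r hM hr
      have hgp : 0 < g r := hgpos r hr
      unfold mLY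
      rw [key_Q M H c1 r hM hr, key_R M H c1 r hM hr]
      congr 2
      rw [show (-(1:ℝ)/2) = -(1/2) by norm_num,
        Real.rpow_neg (inv_nonneg.mpr hgp.le), Real.inv_rpow hgp.le, inv_inv,
        ← Real.sqrt_eq_rpow, ← Real.sqrt_eq_rpow,
        ← Real.sqrt_mul (by positivity : (0:ℝ) ≤ f M r * (g r)⁻¹)]
      congr 1
      field_simp
    refine Tendsto.congr' (eventuallyEq_nhdsWithin_of_eqOn fun r hr => (heq r hr).symm) ?_
    have : Tendsto (fun r : ℝ => r * (1 - Real.sqrt (f M r))) (𝓝[>] (2 * M))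
        (𝓝 (2 * M * (1 - Real.sqrt 0))) := by
      apply Tendsto.mul (tendsto_nhdsWithin_of_tendsto_nhds tendsto_id)
      exact tendsto_const_nhds.sub (Real.continuous_sqrt.continuousAt.tendsto.comp hft)
    simpa using this
end
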